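/- arXiv:1810.10788 — 2 statements merged into one kernel-verified Lean document; each statement's English description precedes it below -/
import Mathlib

section
/- Let ε > 0, K = exp(-C/ε) entrywise, and M = diag(u) K diag(v) for entrywise positive u, v. Then for each (k,ℓ), the partial derivative of the map M ↦ trace(CᵀM) + ε D(M) at M in the (k,ℓ) coordinate equals ε (log u_k + log v_ℓ); i.e., the gradient of the regularized objective at such M lies in the span of row- and column-constant matrices. -/
/-- At a matrix of Sinkhorn form `m_{kℓ} = u_k exp(-c_{kℓ}/ε) v_ℓ`, the partial
derivative of the entropy-regularized objective `M ↦ trace(CᵀM) + ε D(M)` in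
the `(k,ℓ)` coordinate equals `ε (log u_k + log v_ℓ)`. -/
theorem regObjective_partial_deriv (n : ℕ) (C : Fin n → Fin n → ℝ)
    (ε : ℝ) (hε : 0 < ε) (u v : Fin n → ℝ)
    (hu : ∀ k, 0 < u k) (hv : ∀ l, 0 < v l)
    (M : Fin n → Fin n → ℝ)
    (hM : ∀ k l, M k l = u k * Real.exp (-(C k l) / ε) * v l) :
    ∀ k l, HasDerivAt (fun t : ℝ =>
        (∑ k', ∑ l', C k' l' *
            (if (k', l') = (k, l) then t else M k' l')) +
          ε * ∑ k', ∑ l',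
            ((if (k', l') = (k, l) then t else M k' l') *
                Real.log (if (k', l') = (k, l) then t else M k' l')
              - (if (k', l') = (k, l) then t else M k' l') + 1))
      (ε * (Real.log (u k) + Real.log (v l))) (M k l) := by
  intro k l
  have hMpos : 0 < M k l := by
    rw [hM]
    exact mul_pos (mul_pos (hu k) (Real.exp_pos _)) (hv l)
  have hentry : ∀ k' l', HasDerivAt
      (fun t : ℝ => if (k', l') = (k, l) then t else M k' l')
      (if (k', l') = (k, l) then 1 else 0) (M k l) := by
    intro k' l'
    by_cases h : (k', l') = (k, l) <;> simp [h, hasDerivAt_id', hasDerivAt_const]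
  have h1 : HasDerivAt (fun t : ℝ =>
      ∑ k', ∑ l', C k' l' * (if (k', l') = (k, l) then t else M k' l'))
      (C k l) (M k l) := by
    have := HasDerivAt.fun_sum (u := Finset.univ)
      (fun k' _ => HasDerivAt.fun_sum (u := Finset.univ)
        (fun l' _ => HasDerivAt.const_mul (C k' l') (hentry k' l')))
    convert this using 1
    case e'_4 => rfl
    case e'_5 => rfl
    simp [Prod.ext_iff, mul_ite, ite_and, Finset.sum_ite_eq']
  have h2 : HasDerivAt (fun t : ℝ =>
      ∑ k', ∑ l',
        ((if (k', l') = (k, l) then t else M k' l') *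
            Real.log (if (k', l') = (k, l) then t else M k' l')
          - (if (k', l') = (k, l) then t else M k' l') + 1))
      (Real.log (M k l)) (M k l) := by
    have hterm : ∀ k' l', HasDerivAt (fun t : ℝ =>
        ((if (k', l') = (k, l) then t else M k' l') *
            Real.log (if (k', l') = (k, l) then t else M k' l')
          - (if (k', l') = (k, l) then t else M k' l') + 1))
        (if (k', l') = (k, l) then Real.log (M k l) else 0) (M k l) := by
      intro k' l'
      by_cases h : (k', l') = (k, l)
      · simp only [h, if_pos]
        have := (Real.hasDerivAt_mul_log hMpos.ne').sub (hasDerivAt_id' (x := M k l))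
        simpa using this.add_const 1
      · simp only [h, if_neg, if_false]
        exact hasDerivAt_const _ _
    have := HasDerivAt.fun_sum (u := Finset.univ)
      (fun k' _ => HasDerivAt.fun_sum (u := Finset.univ)
        (fun l' _ => hterm k' l'))
    convert this using 1
    case e'_4 => rfl
    case e'_5 => rfl
    simp [Prod.ext_iff, ite_and, Finset.sum_ite_eq']
  have hlog : Real.log (M k l) = Real.log (u k) + (-(C k l) / ε) + Real.log (v l) := by
    rw [hM, Real.log_mul (mul_pos (hu k) (Real.exp_pos _)).ne' (hv l).ne', Real.log_mul (hu k).ne'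
      (Real.exp_pos _).ne', Real.log_exp]
  have := h1.add (h2.const_mul ε)
  convert this using 1
  case e'_4 => rfl
  case e'_5 => rfl
  case e'_8 => rfl
  rw [hlog]
  field_simp
  ring
end

section
/- Uniqueness of Sinkhorn scalings up to a common constant: if diag(u) K diag(v) = diag(u') K diag(v') for entrywise positive vectors u, v, u', v' and a matrix K with strictly positive entries, then there exists t > 0 with u' = t u and v' = v / t. -/
/-- Uniqueness of Sinkhorn scalings up to a common constant: if
`diag(u) K diag(v) = diag(u') K diag(v')` with `K` entrywise positive and
`u, v, u', v'` entrywise positive, then `u' = t u` and `v' = v / t` for some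
`t > 0`. -/
theorem sinkhorn_scaling_unique (n : ℕ) (hn : 1 ≤ n)
    (K : Fin n → Fin n → ℝ) (hK : ∀ k l, 0 < K k l)
    (u v u' v' : Fin n → ℝ)
    (hu : ∀ k, 0 < u k) (hv : ∀ l, 0 < v l)
    (hu' : ∀ k, 0 < u' k) (hv' : ∀ l, 0 < v' l)
    (heq : ∀ k l, u k * K k l * v l = u' k * K k l * v' l) :
    ∃ t : ℝ, 0 < t ∧ (∀ k, u' k = t * u k) ∧ (∀ l, v' l = v l / t) := by
  have i0 : Fin n := ⟨0, hn⟩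
  have key : ∀ k l, u k * v l = u' k * v' l := by
    intro k l
    have hKne := (hK k l).ne'
    have h : (u k * v l) * K k l = (u' k * v' l) * K k l := by
      linear_combination heq k l
    exact mul_right_cancel₀ hKne h
  refine ⟨u' i0 / u i0, div_pos (hu' i0) (hu i0), ?_, ?_⟩
  · intro k
    have h1 := key k i0
    have h2 := key i0 i0
    have hvne := (hv' i0).ne'
    rw [div_mul_eq_mul_div, eq_div_iff (hu i0).ne']
    apply mul_right_cancel₀ hvne
    linear_combination (- u i0) * h1 + u k * h2
  · intro l
    have hune := (hu' i0).ne'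
    rw [div_div_eq_mul_div, eq_div_iff hune]
    linear_combination - key i0 l
end
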